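/- Let k > 1, τ₀ > 0 and C > 0. There exist constants M > 0 and ε₀ > 0 such that for all ε ∈ (0, ε₀]: if E : [0, τ₀/ε³] → [0, ∞) is differentiable, E(0) ≤ 1, and satisfies E'(t) ≤ C ε³ ( E(t) + 1 + ε^{-2} (1 + (ε t)²)^{-k/2} ) for all t in [0, τ₀/ε³], then E(t) ≤ M for all t ∈ [0, τ₀/ε³], where M can be chosen independently of ε. -/

import Mathlib

open Real Set

private lemma decay_bound {k : ℝ} (hk : 1 < k) {σ : ℝ} (hσ : 0 ≤ σ) :
    (1 + σ ^ 2) ^ (-(k / 2)) ≤ 2 ^ (k / 2) * (1 + σ) ^ (-k) := by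
  have ha : (0:ℝ) < 1 + σ ^ 2 := by positivity
  have hb : (0:ℝ) < 1 + σ := by linarith
  have hsq : (1 + σ) ^ 2 ≤ 2 * (1 + σ ^ 2) := by nlinarith [sq_nonneg (σ - 1)]
  have key : (1 + σ) ^ k ≤ 2 ^ (k / 2) * (1 + σ ^ 2) ^ (k / 2) := by
    have h1 : (1 + σ) ^ k = ((1 + σ) ^ 2) ^ (k / 2) := by
      rw [← Real.rpow_natCast (1 + σ) 2, ← Real.rpow_mul hb.le]
      congr 1; ring
    rw [h1]
    calc ((1 + σ) ^ 2) ^ (k / 2) ≤ (2 * (1 + σ ^ 2)) ^ (k / 2) :=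
          Real.rpow_le_rpow (by positivity) hsq (by linarith)
      _ = 2 ^ (k / 2) * (1 + σ ^ 2) ^ (k / 2) :=
          Real.mul_rpow (by norm_num) ha.le
  have hap : (0:ℝ) < (1 + σ ^ 2) ^ (k / 2) := Real.rpow_pos_of_pos ha _
  have hbp : (0:ℝ) < (1 + σ) ^ k := Real.rpow_pos_of_pos hb _
  rw [Real.rpow_neg ha.le, Real.rpow_neg hb.le, inv_eq_one_div, inv_eq_one_div,
    mul_one_div, div_le_div_iff₀ hap hbp, one_mul]
  exact key

theorem kdv_gronwall_lemma
    (k τ₀ C : ℝ) (hk : 1 < k) (hτ₀ : 0 < τ₀) (hC : 0 < C) :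
    ∃ M > 0, ∃ ε₀ > 0, ∀ ε : ℝ, 0 < ε → ε ≤ ε₀ →
      ∀ E : ℝ → ℝ,
        (∀ t ∈ Set.Icc (0 : ℝ) (τ₀ / ε ^ 3), 0 ≤ E t) →
        (∀ t ∈ Set.Icc (0 : ℝ) (τ₀ / ε ^ 3), DifferentiableAt ℝ E t) →
        E 0 ≤ 1 →
        (∀ t ∈ Set.Icc (0 : ℝ) (τ₀ / ε ^ 3),
          deriv E t ≤ C * ε ^ 3 *
            (E t + 1 + ε ^ (-2 : ℤ) * (1 + (ε * t) ^ 2) ^ (-(k / 2)))) →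
        ∀ t ∈ Set.Icc (0 : ℝ) (τ₀ / ε ^ 3), E t ≤ M := by
  have hk1 : (0:ℝ) < k - 1 := by linarith
  set c₀ : ℝ := C * 2 ^ (k / 2) / (k - 1) with hc₀
  have h2pow : (0:ℝ) < 2 ^ (k / 2) := Real.rpow_pos_of_pos (by norm_num) _
  have hc₀pos : 0 < c₀ := by
    apply div_pos _ hk1; positivity
  refine ⟨Real.exp (C * τ₀) * (1 + C * τ₀ + c₀), by positivity, 1, one_pos, ?_⟩
  intro ε hε hε1 E hEnn hEdiff hE0 hED t ht
  set K : ℝ := C * ε ^ 3 with hKdef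
  have hKpos : 0 < K := by positivity
  set T : ℝ := τ₀ / ε ^ 3 with hTdef
  have hTpos : 0 < T := by positivity
  set F : ℝ → ℝ := fun s => Real.exp (-(K * s)) * E s - 1 -
      (K * s + c₀ * (1 - (1 + ε * s) ^ (1 - k))) with hF
  -- HasDerivAt F at each point of Icc 0 T
  have hDeriv : ∀ s ∈ Icc (0:ℝ) T, HasDerivAt F
      (Real.exp (-(K * s)) * (-K) * E s + Real.exp (-(K * s)) * deriv E s
        - (K + c₀ * ((k - 1) * ε * (1 + ε * s) ^ (-k)))) s := by
    intro s hs
    have hbpos : (0:ℝ) < 1 + ε * s := by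
      have := hs.1; nlinarith
    have hexp : HasDerivAt (fun s : ℝ => Real.exp (-(K * s)))
        (Real.exp (-(K * s)) * (-K)) s := by
      have h1 : HasDerivAt (fun s : ℝ => -(K * s)) (-K) s := by
        have h := ((hasDerivAt_id' s).const_mul K).neg; rwa [mul_one] at h
      exact h1.exp
    have hE' : HasDerivAt E (deriv E s) s := (hEdiff s hs).hasDerivAt
    have hprod := hexp.mul hE'
    have hbase : HasDerivAt (fun s : ℝ => 1 + ε * s) ε s := by
      simpa using ((hasDerivAt_id s).const_mul ε).const_add 1
    have hrpow : HasDerivAt (fun s : ℝ => (1 + ε * s) ^ (1 - k))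
        (ε * (1 - k) * (1 + ε * s) ^ (1 - k - 1)) s :=
      hbase.rpow_const (Or.inl hbpos.ne')
    have hlin : HasDerivAt (fun s : ℝ => K * s) K s := by
      simpa using (hasDerivAt_id s).const_mul K
    have hΦ : HasDerivAt (fun s : ℝ => K * s + c₀ * (1 - (1 + ε * s) ^ (1 - k)))
        (K + c₀ * (0 - ε * (1 - k) * (1 + ε * s) ^ (1 - k - 1))) s :=
      hlin.add (((hasDerivAt_const s (1:ℝ)).sub hrpow).const_mul c₀)
    have := (hprod.sub_const 1).sub hΦ
    refine this.congr_deriv ?_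
    rw [show (1:ℝ) - k - 1 = -k by ring]
    ring
  have hcont : ContinuousOn F (Icc 0 T) := fun s hs =>
    (hDeriv s hs).differentiableAt.continuousAt.continuousWithinAt
  have hanti : AntitoneOn F (Icc 0 T) := by
    apply antitoneOn_of_deriv_nonpos (convex_Icc 0 T) hcont
    · intro s hs
      rw [interior_Icc] at hs
      exact (hDeriv s (Ioo_subset_Icc_self hs)).differentiableAt.differentiableWithinAt
    · intro s hs
      rw [interior_Icc] at hs
      have hsIcc : s ∈ Icc (0:ℝ) T := Ioo_subset_Icc_self hs
      rw [(hDeriv s hsIcc).deriv]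
      set x : ℝ := Real.exp (-(K * s)) with hx
      have hxpos : 0 < x := Real.exp_pos _
      have hx1 : x ≤ 1 := by
        rw [hx]; apply Real.exp_le_one_iff.mpr
        have : 0 ≤ K * s := mul_nonneg hKpos.le hs.1.le
        linarith
      set P : ℝ := (1 + (ε * s) ^ 2) ^ (-(k / 2)) with hP
      have hPnn : 0 ≤ P := Real.rpow_nonneg (by positivity) _
      have hQnn : 0 ≤ (1 + ε * s) ^ (-k) := by
        apply Real.rpow_nonneg; nlinarith [hs.1]
      have hKe : K * (ε ^ 2)⁻¹ = C * ε := by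
        rw [hKdef]; field_simp
      have hle : deriv E s - K * E s ≤ K + C * ε * P := by
        have h := hED s hsIcc
        rw [zpow_neg, zpow_two] at h
        have : (ε * ε)⁻¹ = (ε^2)⁻¹ := by rw [sq]
        rw [this] at h
        have h2 : K * (ε ^ 2)⁻¹ * P = C * ε * P := by rw [hKe]
        nlinarith [h]
      have h1 : x * (deriv E s - K * E s) ≤ x * (K + C * ε * P) :=
        mul_le_mul_of_nonneg_left hle hxpos.le
      have h2 : x * (K + C * ε * P) ≤ K + C * ε * P := by
        have : 0 ≤ K + C * ε * P := by positivity
        nlinarith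
      have h3 : C * ε * P ≤ c₀ * ((k - 1) * ε * (1 + ε * s) ^ (-k)) := by
        have hσ : 0 ≤ ε * s := mul_nonneg hε.le hs.1.le
        have hd := decay_bound hk hσ
        have hc : c₀ * (k - 1) = C * 2 ^ (k / 2) := by
          rw [hc₀]; field_simp
        calc C * ε * P ≤ C * ε * (2 ^ (k / 2) * (1 + ε * s) ^ (-k)) := by
              apply mul_le_mul_of_nonneg_left hd (by positivity)
          _ = c₀ * ((k - 1) * ε * (1 + ε * s) ^ (-k)) := by
              rw [show c₀ * ((k - 1) * ε * (1 + ε * s) ^ (-k))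
                  = c₀ * (k - 1) * (ε * (1 + ε * s) ^ (-k)) by ring, hc]; ring
      have hrear : x * (-K) * E s + x * deriv E s = x * (deriv E s - K * E s) := by
        ring
      linarith [h1, h2, h3, hrear.le, hrear.ge]
  -- F t ≤ F 0
  have h0mem : (0:ℝ) ∈ Icc (0:ℝ) T := ⟨le_refl _, hTpos.le⟩
  have hFt : F t ≤ F 0 := hanti h0mem ht ht.1
  have hF0 : F 0 = E 0 - 1 := by
    simp [hF, Real.one_rpow]
  rw [hF0] at hFt
  have hFt0 : F t ≤ 0 := by linarith
  -- unfold F t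
  have hbt : (0:ℝ) < 1 + ε * t := by nlinarith [ht.1]
  have hrnn : 0 ≤ (1 + ε * t) ^ (1 - k) := Real.rpow_nonneg hbt.le _
  have hKt : K * t ≤ C * τ₀ := by
    have h1 : t ≤ T := ht.2
    have h2 : ε ^ 3 * t ≤ τ₀ := by
      rw [hTdef] at h1
      calc ε ^ 3 * t ≤ ε ^ 3 * (τ₀ / ε ^ 3) :=
            mul_le_mul_of_nonneg_left h1 (by positivity)
        _ = τ₀ := by field_simp
    calc K * t = C * (ε ^ 3 * t) := by rw [hKdef]; ring
      _ ≤ C * τ₀ := mul_le_mul_of_nonneg_left h2 hC.le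
  have hmain : Real.exp (-(K * t)) * E t ≤ 1 + C * τ₀ + c₀ := by
    have : Real.exp (-(K * t)) * E t ≤ 1 + (K * t + c₀ * (1 - (1 + ε * t) ^ (1 - k))) := by
      have := hFt0
      simp only [hF] at this
      linarith
    have hcb : c₀ * (1 - (1 + ε * t) ^ (1 - k)) ≤ c₀ := by nlinarith
    linarith
  have hexp_pos : (0:ℝ) < Real.exp (K * t) := Real.exp_pos _
  have := mul_le_mul_of_nonneg_left hmain hexp_pos.le
  rw [← mul_assoc, ← Real.exp_add] at this
  simp only [add_neg_cancel, Real.exp_zero, one_mul] at this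
  calc E t ≤ Real.exp (K * t) * (1 + C * τ₀ + c₀) := this
    _ ≤ Real.exp (C * τ₀) * (1 + C * τ₀ + c₀) := by
        apply mul_le_mul_of_nonneg_right (Real.exp_le_exp.mpr hKt)
        positivity
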